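/- Let q be a prime power and let B be the real matrix indexed by (𝔽_q × 𝔽_q) × (𝔽_q × 𝔽_q) with B((b,c),(α,γ)) = 1 if c = α·b + γ and 0 otherwise. Then: (i) the all-ones vector is an eigenvector of B·Bᵀ with eigenvalue q²; and (ii) for every function f : 𝔽_q × 𝔽_q → ℝ with ∑_{(b,c)} f(b,c) = 0, one has fᵀ(B·Bᵀ)f ≤ q · ∑_{(b,c)} f(b,c)². In particular, the largest eigenvalue of B·Bᵀ is q² and every other eigenvalue is at most q (equivalently, the second largest eigenvalue of the normalized adjacency matrix of the associated q-regular bipartite link graph is 1/√q). -/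

import Mathlib

open Matrix Finset

/-- The biadjacency matrix of the link graph: both sides are indexed by `F × F`, and the
left vertex `(b, c)` is adjacent to the right vertex `(α, γ)` iff `c = α·b + γ`. -/
def linkB (F : Type*) [Field F] [DecidableEq F] : Matrix (F × F) (F × F) ℝ :=
  Matrix.of fun p r => if p.2 = r.1 * p.1 + r.2 then 1 else 0

lemma linkB_entry {F : Type*} [Field F] [Fintype F] [DecidableEq F] (p r : F × F) :
    (linkB F * (linkB F)ᵀ) p r =
      (Fintype.card F : ℝ) * (if p = r then 1 else 0) + 1 - (if p.1 = r.1 then 1 else 0) := by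
  rw [Matrix.mul_apply]
  simp only [linkB, Matrix.transpose_apply, Matrix.of_apply]
  rw [Fintype.sum_prod_type]
  have h1 : ∀ α : F, ∑ γ : F,
      (if p.2 = α * p.1 + γ then (1:ℝ) else 0) * (if r.2 = α * r.1 + γ then 1 else 0)
      = if r.2 = α * r.1 + (p.2 - α * p.1) then 1 else 0 := by
    intro α
    rw [Finset.sum_eq_single (p.2 - α * p.1)]
    · simp
    · intro γ _ hγ
      have : ¬ (p.2 = α * p.1 + γ) := fun h => hγ (by rw [h]; ring)
      simp [this]
    · simp
  simp only [h1]
  by_cases hb : p.1 = r.1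
  · by_cases hc : p.2 = r.2
    · have hpr : p = r := Prod.ext hb hc
      simp only [hpr, if_pos rfl]
      have : ∀ α : F, r.2 = α * r.1 + (r.2 - α * r.1) := by intro α; ring
      simp [this]
    · have hpr : p ≠ r := fun h => hc (by rw [h])
      have this2 : ∀ α : F, ¬ (r.2 = α * r.1 + (p.2 - α * p.1)) := by
        intro α h
        apply hc
        rw [hb] at h
        have : r.2 = p.2 := by rw [h]; ring
        exact this.symm
      have hc' : ¬ (r.2 = p.2) := fun h => hc h.symm
      simp [this2, hpr, hb, hc']
  · have hpr : p ≠ r := fun h => hb (by rw [h])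
    have key : ∀ α : F, (r.2 = α * r.1 + (p.2 - α * p.1)) ↔ α = (r.2 - p.2) / (r.1 - p.1) := by
      intro α
      have hne : r.1 - p.1 ≠ 0 := sub_ne_zero.mpr (fun h => hb h.symm)
      rw [eq_div_iff hne]
      constructor
      · intro h; linear_combination -h
      · intro h; linear_combination -h
    simp only [key]
    simp [hpr, hb]

/-- Spectral gap of the link: the all-ones vector is an eigenvector of `B·Bᵀ` with
eigenvalue `q²`, and on the orthogonal complement of the all-ones vector the quadratic
form of `B·Bᵀ` is at most `q·‖f‖²` (so all other eigenvalues are at most `q`;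
equivalently, the second largest normalized eigenvalue of the link is `1/√q`). -/
theorem linkB_spectral_gap (F : Type*) [Field F] [Fintype F] [DecidableEq F] :
    ((linkB F * (linkB F)ᵀ) *ᵥ (fun _ => (1 : ℝ)) =
      fun _ => ((Fintype.card F : ℝ)) ^ 2) ∧
    (∀ f : F × F → ℝ, (∑ x, f x) = 0 →
      f ⬝ᵥ ((linkB F * (linkB F)ᵀ) *ᵥ f) ≤ (Fintype.card F : ℝ) * ∑ x, (f x) ^ 2) := by
  set q : ℝ := (Fintype.card F : ℝ) with hq
  constructor
  · funext p
    rw [Matrix.mulVec]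
    simp only [dotProduct, linkB_entry, mul_one]
    rw [Finset.sum_sub_distrib, Finset.sum_add_distrib]
    have e1 : ∑ r : F × F, q * (if p = r then (1:ℝ) else 0) = q := by
      simp [Finset.sum_ite_eq]
    have e2 : ∑ r : F × F, (if p.1 = r.1 then (1:ℝ) else 0) = q := by
      rw [Fintype.sum_prod_type]
      rw [Finset.sum_eq_single p.1]
      · simp [hq]
      · intro b _ hb
        have : p.1 ≠ b := fun h => hb h.symm
        simp [this]
      · simp
    have e3 : ∑ _r : F × F, (1:ℝ) = q * q := by
      rw [Finset.sum_const, nsmul_eq_mul, mul_one, Finset.card_univ, Fintype.card_prod]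
      push_cast
      ring
    rw [e1, e2, e3]
    ring
  · intro f hf
    rw [dotProduct]
    simp only [Matrix.mulVec, dotProduct, linkB_entry]
    have expand : ∀ p : F × F,
        ∑ r : F × F, ((q * if p = r then (1:ℝ) else 0) + 1 - if p.1 = r.1 then 1 else 0) * f r
        = q * f p + (∑ r, f r) - ∑ r : F × F, (if p.1 = r.1 then (1:ℝ) else 0) * f r := by
      intro p
      simp only [sub_mul, add_mul, one_mul]
      rw [Finset.sum_sub_distrib, Finset.sum_add_distrib]
      congr 2
      rw [Finset.sum_eq_single p]
      · simp
      · intro r _ hr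
        have : p ≠ r := fun h => hr h.symm
        simp [this]
      · simp
    simp only [← hq, expand, hf, add_zero]
    simp only [mul_sub]
    rw [Finset.sum_sub_distrib]
    have key : ∑ p : F × F, f p * (∑ r : F × F, (if p.1 = r.1 then (1:ℝ) else 0) * f r)
        = ∑ b : F, (∑ c : F, f (b, c))^2 := by
      rw [Fintype.sum_prod_type]
      congr 1; funext b
      show ∑ y : F, f (b, y) * ∑ r : F × F, (if b = r.1 then (1:ℝ) else 0) * f r = _
      have inner : ∑ r : F × F, (if b = r.1 then (1:ℝ) else 0) * f r = ∑ c : F, f (b, c) := by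
        rw [Fintype.sum_prod_type]
        rw [Finset.sum_eq_single b]
        · simp
        · intro b' _ hb'
          have : b ≠ b' := fun h => hb' h.symm
          simp [this]
        · simp
      rw [inner, ← Finset.sum_mul, sq]
    rw [key]
    have hnn : 0 ≤ ∑ b : F, (∑ c : F, f (b, c))^2 :=
      Finset.sum_nonneg fun b _ => sq_nonneg _
    have hqf : ∑ p : F × F, q * f p ^ 2 = q * ∑ x : F × F, f x ^ 2 := by
      rw [Finset.mul_sum]
    have : ∑ p : F × F, f p * (q * f p) = ∑ p : F × F, q * f p ^ 2 := by
      congr 1; funext p; ring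
    rw [this, hqf]
    linarith
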